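/- Let p ≥ 1 and φ : ℤ → ℕ → ℝ with φ t j = 0 for all j > p. Assume there exists ε ∈ (0,1) such that for every t ∈ ℤ: φ t 0 > 0, φ (t+p) p ≥ 0, and φ (t+j) j ≤ ε · φ (t+j−1) (j−1) for every j with 1 ≤ j ≤ p (so in particular φ t 0 > φ (t+1) 1 > ⋯ > φ (t+p) p ≥ 0 whenever the intermediate values are positive). Then φ has a left inverse with absolutely summable coefficients: there exists θ : ℤ → ℕ → ℝ such that ∑_{i=0}^{∞} |θ t i| < ∞ for every t, and for all t ∈ ℤ and all i ∈ ℕ, ∑_{j=0}^{min(p,i)} θ t (i−j) · φ (t−i+j) j equals 1 when i = 0 and equals 0 when i ≥ 1. -/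

import Mathlib

open Finset

noncomputable def nuF (φ : ℤ → ℕ → ℝ) (t : ℤ) (m e : ℕ) : ℝ :=
  φ (t - m + e) e / φ (t - m) 0

noncomputable def ggF (φ : ℤ → ℕ → ℝ) (ε : ℝ) (t : ℤ) (m e : ℕ) : ℝ :=
  ε * nuF φ t m (e - 1) - nuF φ t m e

noncomputable def yyF (φ : ℤ → ℕ → ℝ) (ε : ℝ) (t : ℤ) : ℕ → ℝ
  | 0 => 1
  | (d+1) => ∑ e ∈ (Finset.range (d+1)).attach,
      yyF φ ε t e.1 * ggF φ ε t (d+1) (d+1 - e.1)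
  termination_by d => d
  decreasing_by exact Finset.mem_range.mp e.2

lemma yyF_zero (φ : ℤ → ℕ → ℝ) (ε : ℝ) (t : ℤ) : yyF φ ε t 0 = 1 := by
  simp [yyF]

lemma yyF_succ (φ : ℤ → ℕ → ℝ) (ε : ℝ) (t : ℤ) (d : ℕ) :
    yyF φ ε t (d+1) = ∑ e ∈ Finset.range (d+1),
      yyF φ ε t e * ggF φ ε t (d+1) (d+1 - e) := by
  rw [yyF.eq_def]
  exact Finset.sum_attach (Finset.range (d+1)) (fun e => yyF φ ε t e * ggF φ ε t (d+1) (d+1 - e))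

theorem stmt_5 (p : ℕ) (hp : 1 ≤ p)
    (φ : ℤ → ℕ → ℝ) (hφp : ∀ (t : ℤ) (j : ℕ), p < j → φ t j = 0)
    (ε : ℝ) (hε0 : 0 < ε) (hε1 : ε < 1)
    (hpos : ∀ t : ℤ, 0 < φ t 0)
    (hlast : ∀ t : ℤ, 0 ≤ φ (t + p) p)
    (hratio : ∀ (t : ℤ) (j : ℕ), 1 ≤ j → j ≤ p →
      φ (t + j) j ≤ ε * φ (t + j - 1) (j - 1)) :
    ∃ θ : ℤ → ℕ → ℝ,
      (∀ t : ℤ, Summable fun i => |θ t i|) ∧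
      (∀ (t : ℤ) (i : ℕ),
        ∑ j ∈ Finset.range (min p i + 1), θ t (i - j) * φ (t - i + j) j =
          if i = 0 then 1 else 0) := by
  have hφne : ∀ s : ℤ, φ s 0 ≠ 0 := fun s => (hpos s).ne'
  -- nonnegativity of φ along diagonals
  have phinn0 : ∀ d e : ℕ, p = e + d → ∀ s : ℤ, 0 ≤ φ (s + e) e := by
    intro d
    induction d with
    | zero =>
      intro e he s
      subst he
      simpa using hlast s
    | succ d ih =>
      intro e he s
      have h1 : 1 ≤ e + 1 := by omega
      have h2 : e + 1 ≤ p := by omega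
      have hr := hratio s (e+1) h1 h2
      have hcast : (((e+1 : ℕ)) : ℤ) = (e : ℤ) + 1 := by push_cast; ring
      rw [hcast] at hr
      have hprev : 0 ≤ φ (s + ((e:ℤ)+1)) (e+1) := by
        have := ih (e+1) (by omega) s
        have hc2 : ((e+1 : ℕ) : ℤ) = (e:ℤ)+1 := by push_cast; ring
        rw [hc2] at this
        exact this
      have : 0 ≤ ε * φ (s + ((e:ℤ)+1) - 1) e := le_trans hprev hr
      have : 0 ≤ φ (s + ((e:ℤ)+1) - 1) e := nonneg_of_mul_nonneg_right this hε0
      have heq : s + ((e:ℤ)+1) - 1 = s + e := by ring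
      rwa [heq] at this
  have phinn : ∀ (e : ℕ) (s : ℤ), 0 ≤ φ (s + e) e := by
    intro e s
    by_cases he : e ≤ p
    · exact phinn0 (p - e) e (by omega) s
    · rw [hφp _ _ (by omega)]
  -- nu facts
  have nu_zero : ∀ (t : ℤ) (m : ℕ), nuF φ t m 0 = 1 := by
    intro t m
    simp [nuF, div_self (hφne (t - m))]
  have nu_nonneg : ∀ (t : ℤ) (m e : ℕ), 0 ≤ nuF φ t m e := by
    intro t m e
    exact div_nonneg (phinn e (t - m)) (hpos (t - m)).le
  have nu_top : ∀ (t : ℤ) (m e : ℕ), p < e → nuF φ t m e = 0 := by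
    intro t m e he
    simp [nuF, hφp _ _ he]
  have nu_step : ∀ (t : ℤ) (m e : ℕ), 1 ≤ e → nuF φ t m e ≤ ε * nuF φ t m (e - 1) := by
    intro t m e he
    by_cases hep : e ≤ p
    · have hr := hratio (t - m) e he hep
      have hcast : ((e - 1 : ℕ) : ℤ) = (e : ℤ) - 1 := by
        push_cast [Nat.cast_sub he]; ring
      unfold nuF
      rw [hcast]
      rw [div_le_iff₀ (hpos (t - (m:ℤ)))]
      have heq : t - (m:ℤ) + ((e:ℤ) - 1) = t - m + e - 1 := by ring
      rw [heq, mul_assoc, div_mul_cancel₀ _ (hφne (t - m))]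
      exact hr
    · rw [nu_top t m e (by omega)]
      exact mul_nonneg hε0.le (nu_nonneg t m (e-1))
  -- gg facts
  have gg_nonneg : ∀ (t : ℤ) (m e : ℕ), 1 ≤ e → 0 ≤ ggF φ ε t m e := by
    intro t m e he
    exact sub_nonneg.mpr (nu_step t m e he)
  have gg_top : ∀ (t : ℤ) (m e : ℕ), p + 1 < e → ggF φ ε t m e = 0 := by
    intro t m e he
    unfold ggF
    rw [nu_top t m e (by omega), nu_top t m (e-1) (by omega)]
    ring
  -- partial sums of gg
  have gsum : ∀ (t : ℤ) (m : ℕ) (E : ℕ), 1 ≤ E →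
      (∑ e ∈ Finset.range E, ggF φ ε t m (e+1)) + nuF φ t m E ≤ ε := by
    intro t m E hE
    induction E with
    | zero => omega
    | succ E ih =>
      rcases Nat.eq_zero_or_pos E with hE0 | hE1
      · subst hE0
        rw [Finset.sum_range_one]
        have hgg : ggF φ ε t m (0+1) = ε * nuF φ t m 0 - nuF φ t m 1 := rfl
        rw [hgg, nu_zero t m]
        linarith [nu_nonneg t m 1]
      · have h1 := ih hE1
        rw [Finset.sum_range_succ]
        have h2 : 0 ≤ nuF φ t m E := nu_nonneg t m E
        have hgg : ggF φ ε t m (E+1) = ε * nuF φ t m E - nuF φ t m (E+1) := rfl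
        rw [hgg]
        nlinarith [h1, h2, nu_nonneg t m (E+1)]
  -- the geometric rate
  set ρ : ℝ := ε ^ ((p + 1 : ℝ)⁻¹) with hρdef
  have hρ0 : 0 < ρ := Real.rpow_pos_of_pos hε0 _
  have hρ1 : ρ < 1 := Real.rpow_lt_one hε0.le hε1 (by positivity)
  have hρpow : ρ ^ (p + 1) = ε := by
    rw [hρdef, ← Real.rpow_natCast (ε ^ ((p + 1 : ℝ)⁻¹)) (p+1), ← Real.rpow_mul hε0.le]
    rw [show ((p+1 : ℕ) : ℝ) = (p:ℝ) + 1 by push_cast; ring]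
    rw [inv_mul_cancel₀ (by positivity : (p:ℝ) + 1 ≠ 0), Real.rpow_one]
  -- sum of gg over a row in the reflected form
  have gsum' : ∀ (t : ℤ) (d : ℕ), 1 ≤ d →
      ∑ e ∈ Finset.range d, ggF φ ε t d (d - e) ≤ ε := by
    intro t d hd
    have hre : ∑ e ∈ Finset.range d, ggF φ ε t d (d - e)
        = ∑ e ∈ Finset.range d, ggF φ ε t d (e + 1) := by
      rw [← Finset.sum_range_reflect (fun e => ggF φ ε t d (e + 1)) d]
      apply Finset.sum_congr rfl
      intro e he
      rw [Finset.mem_range] at he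
      congr 1
      omega
    rw [hre]
    have := gsum t d d hd
    linarith [nu_nonneg t d d]
  -- bounds on yy
  have ybnd : ∀ (t : ℤ) (d : ℕ), 0 ≤ yyF φ ε t d ∧ yyF φ ε t d ≤ ρ ^ d := by
    intro t d
    induction d using Nat.strong_induction_on with
    | _ d ih =>
      match d with
      | 0 => rw [yyF_zero]; norm_num
      | (d+1) =>
        rw [yyF_succ]
        constructor
        · apply Finset.sum_nonneg
          intro e he
          rw [Finset.mem_range] at he
          exact mul_nonneg (ih e (by omega)).1 (gg_nonneg t (d+1) (d+1-e) (by omega))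
        · calc ∑ e ∈ Finset.range (d+1), yyF φ ε t e * ggF φ ε t (d+1) (d+1-e)
              ≤ ∑ e ∈ Finset.range (d+1), (ρ ^ (d+1) / ε) * ggF φ ε t (d+1) (d+1-e) := by
                apply Finset.sum_le_sum
                intro e he
                rw [Finset.mem_range] at he
                by_cases hpe : d + 1 - e ≤ p + 1
                · apply mul_le_mul_of_nonneg_right _ (gg_nonneg t (d+1) (d+1-e) (by omega))
                  have h1 : yyF φ ε t e ≤ ρ ^ e := (ih e (by omega)).2
                  have h2 : ε * ρ ^ e ≤ ρ ^ (d+1) := by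
                    rw [← hρpow, ← pow_add]
                    exact pow_le_pow_of_le_one hρ0.le hρ1.le (by omega)
                  calc yyF φ ε t e ≤ ρ ^ e := h1
                    _ ≤ ρ ^ (d+1) / ε := by rw [le_div_iff₀ hε0]; linarith [h2]
                · rw [gg_top t (d+1) (d+1-e) (by omega)]
                  simp
            _ = (ρ ^ (d+1) / ε) * ∑ e ∈ Finset.range (d+1), ggF φ ε t (d+1) (d+1-e) := by
                rw [Finset.mul_sum]
            _ ≤ (ρ ^ (d+1) / ε) * ε := by
                apply mul_le_mul_of_nonneg_left (gsum' t (d+1) (by omega)) (by positivity)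
            _ = ρ ^ (d+1) := by field_simp
  -- the inverse coefficients
  refine ⟨fun t i => (yyF φ ε t i - ε * (if i = 0 then 0 else yyF φ ε t (i-1))) / φ t 0, ?_, ?_⟩
  · -- summability
    intro t
    have hb : ∀ i : ℕ, |(yyF φ ε t i - ε * (if i = 0 then 0 else yyF φ ε t (i-1))) / φ t 0|
        ≤ ((1 + ε / ρ) / φ t 0) * ρ ^ i := by
      intro i
      rw [abs_div, abs_of_pos (hpos t), div_mul_eq_mul_div, div_le_div_iff_of_pos_right (hpos t)]
      have h1 := (ybnd t i).1
      have h2 := (ybnd t i).2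
      by_cases hi : i = 0
      · subst hi
        rw [if_pos rfl, mul_zero, sub_zero, pow_zero, abs_of_nonneg h1]
        rw [pow_zero] at h2
        nlinarith [div_nonneg hε0.le hρ0.le]
      · rw [if_neg hi]
        have h3 := (ybnd t (i-1)).1
        have h4 := (ybnd t (i-1)).2
        have h5 : ε * ρ ^ (i-1) = (ε / ρ) * ρ ^ i := by
          have hpi : ρ ^ i = ρ ^ (i-1) * ρ := by
            rw [← pow_succ]
            congr 1
            omega
          rw [hpi]
          field_simp
        have habs : |yyF φ ε t i - ε * yyF φ ε t (i-1)| ≤ ρ ^ i + ε * ρ ^ (i-1) := by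
          rw [abs_sub_le_iff]
          constructor
          · nlinarith [mul_nonneg hε0.le h3]
          · nlinarith [pow_nonneg hρ0.le i]
        calc |yyF φ ε t i - ε * yyF φ ε t (i-1)| ≤ ρ ^ i + ε * ρ ^ (i-1) := habs
          _ = (1 + ε / ρ) * ρ ^ i := by rw [h5]; ring
    apply Summable.of_nonneg_of_le (fun i => abs_nonneg _) hb
    exact (summable_geometric_of_lt_one hρ0.le hρ1).mul_left _
  · -- the left-inverse identity
    intro t i
    rcases Nat.eq_zero_or_pos i with h0 | hi
    · subst h0
      rw [if_pos rfl]
      simp only [Nat.min_zero, zero_add, Finset.sum_range_one, Nat.sub_zero, Nat.cast_zero,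
        sub_zero, add_zero, if_pos rfl, mul_zero, yyF_zero]
      field_simp
      simp [hφne t]
    · rw [if_neg (by omega)]
      have hS : ∑ j ∈ Finset.range (min p i + 1),
          (yyF φ ε t (i-j) - ε * (if i - j = 0 then 0 else yyF φ ε t (i-j-1))) * nuF φ t i j
          = 0 := by
        have e1 : ∑ j ∈ Finset.range (min p i + 1),
            (yyF φ ε t (i-j) - ε * (if i - j = 0 then 0 else yyF φ ε t (i-j-1))) * nuF φ t i j
            = (∑ j ∈ Finset.range (min p i + 1), yyF φ ε t (i-j) * nuF φ t i j)
              - ε * ∑ j ∈ Finset.range (min p i + 1),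
                  (if i - j = 0 then 0 else yyF φ ε t (i-j-1)) * nuF φ t i j := by
          rw [Finset.mul_sum, ← Finset.sum_sub_distrib]
          apply Finset.sum_congr rfl
          intro j _
          ring
        have hextA : ∑ j ∈ Finset.range (min p i + 1), yyF φ ε t (i-j) * nuF φ t i j
            = ∑ j ∈ Finset.range (i + 1), yyF φ ε t (i-j) * nuF φ t i j := by
          apply Finset.sum_subset (Finset.range_subset_range.mpr (by omega))
          intro j hj hnj
          rw [Finset.mem_range] at hj hnj
          rw [nu_top t i j (by omega), mul_zero]
        have hextB : ∑ j ∈ Finset.range (min p i + 1),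
              (if i - j = 0 then (0:ℝ) else yyF φ ε t (i-j-1)) * nuF φ t i j
            = ∑ j ∈ Finset.range (i + 1),
              (if i - j = 0 then (0:ℝ) else yyF φ ε t (i-j-1)) * nuF φ t i j := by
          apply Finset.sum_subset (Finset.range_subset_range.mpr (by omega))
          intro j hj hnj
          rw [Finset.mem_range] at hj hnj
          rw [nu_top t i j (by omega), mul_zero]
        have hysum : yyF φ ε t i = ∑ e ∈ Finset.range i, yyF φ ε t e * ggF φ ε t i (i - e) := by
          obtain ⟨d, rfl⟩ : ∃ d, i = d + 1 := ⟨i - 1, by omega⟩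
          exact yyF_succ φ ε t d
        have hA : ∑ j ∈ Finset.range (i + 1), yyF φ ε t (i-j) * nuF φ t i j
            = ε * ∑ e ∈ Finset.range i, yyF φ ε t e * nuF φ t i (i-e-1) := by
          rw [Finset.sum_range_succ']
          have h0 : yyF φ ε t (i-0) * nuF φ t i 0 = yyF φ ε t i := by
            rw [Nat.sub_zero, nu_zero t i, mul_one]
          rw [h0]
          have hrefl : ∑ j ∈ Finset.range i, yyF φ ε t (i-(j+1)) * nuF φ t i (j+1)
              = ∑ e ∈ Finset.range i, yyF φ ε t e * nuF φ t i (i-e) := by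
            rw [← Finset.sum_range_reflect (fun e => yyF φ ε t e * nuF φ t i (i-e)) i]
            apply Finset.sum_congr rfl
            intro j hj
            rw [Finset.mem_range] at hj
            congr 2 <;> omega
          rw [hrefl, hysum, ← Finset.sum_add_distrib, Finset.mul_sum]
          apply Finset.sum_congr rfl
          intro e he
          have hgg : ggF φ ε t i (i-e) = ε * nuF φ t i (i-e-1) - nuF φ t i (i-e) := rfl
          rw [hgg]
          ring
        have hB : ∑ j ∈ Finset.range (i + 1),
              (if i - j = 0 then (0:ℝ) else yyF φ ε t (i-j-1)) * nuF φ t i j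
            = ∑ e ∈ Finset.range i, yyF φ ε t e * nuF φ t i (i-1-e) := by
          rw [Finset.sum_range_succ]
          have hl : (if i - i = 0 then (0:ℝ) else yyF φ ε t (i-i-1)) * nuF φ t i i = 0 := by
            simp
          rw [hl, add_zero]
          have hc : ∀ j ∈ Finset.range i,
              (if i - j = 0 then (0:ℝ) else yyF φ ε t (i-j-1)) * nuF φ t i j
              = yyF φ ε t (i-j-1) * nuF φ t i j := by
            intro j hj
            rw [Finset.mem_range] at hj
            rw [if_neg (by omega)]
          rw [Finset.sum_congr rfl hc,
            ← Finset.sum_range_reflect (fun e => yyF φ ε t e * nuF φ t i (i-1-e)) i]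
          apply Finset.sum_congr rfl
          intro j hj
          rw [Finset.mem_range] at hj
          congr 2 <;> omega
        rw [e1, hextA, hextB, hA, hB]
        have hc2 : ∀ e ∈ Finset.range i,
            yyF φ ε t e * nuF φ t i (i-e-1) = yyF φ ε t e * nuF φ t i (i-1-e) := by
          intro e _
          congr 2
          omega
        rw [Finset.sum_congr rfl hc2]
        ring
      have hterm : ∀ j ∈ Finset.range (min p i + 1),
          (yyF φ ε t (i-j) - ε * (if i - j = 0 then 0 else yyF φ ε t (i-j-1))) / φ t 0
            * φ (t - i + j) j
          = (φ (t - i) 0 / φ t 0) *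
            ((yyF φ ε t (i-j) - ε * (if i - j = 0 then 0 else yyF φ ε t (i-j-1)))
              * nuF φ t i j) := by
        intro j _
        unfold nuF
        field_simp [hφne t, hφne (t - (i:ℤ))]
      rw [Finset.sum_congr rfl hterm, ← Finset.mul_sum, hS, mul_zero]
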